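/- arXiv:2002.03492 — 6 statements merged into one kernel-verified Lean document; each statement's English description precedes it below -/
import Mathlib

section
/- Let α ∈ (0,1), λ > 0, β > 0 and let K₀, K₁ be real constants. Define f₁ : (0,1] → ℝ by f₁(r) = K₀((1−α)r+α)^(β/λ)/((λ+2β)(1−α)) + βr/(β+2λ) − α(βλ+β+2λ)/((β+λ)(β+2λ)(1−α)) + K₁((1−α)r+α)^(−(1+β/λ)). Then f₁ is differentiable on (0,1] and for every r ∈ (0,1] it satisfies the first-order differential equation λ·f₁′(r) = K₀((1−α)r+α)^(β/λ−1) − α/((1−α)r+α) − (1−α)(β+λ)f₁(r)/((1−α)r+α) + (1−α)βr/((1−α)r+α). -/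
/-- Country 1's part of Lemma 2: the general best-response form `f₁` satisfies
the first-order ODE `λ f₁' = K₀((1−α)r+α)^(β/λ−1) − α/((1−α)r+α)
  − (1−α)(β+λ)f₁/((1−α)r+α) + (1−α)βr/((1−α)r+α)` on `(0,1]`. -/
theorem lemma2_country1_ODE
    (α lam β K₀ K₁ : ℝ) (hα : α ∈ Set.Ioo (0:ℝ) 1) (hlam : 0 < lam) (hβ : 0 < β)
    (f₁ : ℝ → ℝ)
    (hf₁ : ∀ r : ℝ, f₁ r =
      K₀ * ((1 - α) * r + α) ^ (β / lam) / ((lam + 2 * β) * (1 - α))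
      + β * r / (β + 2 * lam)
      - α * (β * lam + β + 2 * lam) / ((β + lam) * (β + 2 * lam) * (1 - α))
      + K₁ * ((1 - α) * r + α) ^ (-(1 + β / lam))) :
    ∀ r ∈ Set.Ioc (0:ℝ) 1, ∃ d : ℝ, HasDerivAt f₁ d r ∧
      lam * d = K₀ * ((1 - α) * r + α) ^ (β / lam - 1)
        - α / ((1 - α) * r + α)
        - (1 - α) * (β + lam) * f₁ r / ((1 - α) * r + α)
        + (1 - α) * β * r / ((1 - α) * r + α) := by
  obtain ⟨hα0, hα1⟩ := hα
  intro r hr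
  obtain ⟨hr0, hr1⟩ := hr
  set u : ℝ := (1 - α) * r + α with hu_def
  have h1α : 0 < 1 - α := by linarith
  have hu : 0 < u := by
    have : 0 < (1 - α) * r := mul_pos h1α hr0
    simp only [hu_def]; linarith
  have hune : u ≠ 0 := ne_of_gt hu
  have hg : HasDerivAt (fun r : ℝ => (1 - α) * r + α) (1 - α) r := by
    simpa using ((hasDerivAt_id r).const_mul (1 - α)).add_const α
  have hp1 : HasDerivAt (fun r : ℝ => ((1 - α) * r + α) ^ (β / lam))
      ((1 - α) * (β / lam) * u ^ (β / lam - 1)) r :=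
    hg.rpow_const (Or.inl hune)
  have hp2 : HasDerivAt (fun r : ℝ => ((1 - α) * r + α) ^ (-(1 + β / lam)))
      ((1 - α) * (-(1 + β / lam)) * u ^ (-(1 + β / lam) - 1)) r :=
    hg.rpow_const (Or.inl hune)
  set d : ℝ :=
    K₀ * ((1 - α) * (β / lam) * u ^ (β / lam - 1)) / ((lam + 2 * β) * (1 - α))
    + β / (β + 2 * lam)
    + K₁ * ((1 - α) * (-(1 + β / lam)) * u ^ (-(1 + β / lam) - 1)) with hd_def
  have hder : HasDerivAt f₁ d r := by
    have heq : f₁ = fun r : ℝ =>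
      K₀ * ((1 - α) * r + α) ^ (β / lam) / ((lam + 2 * β) * (1 - α))
      + β * r / (β + 2 * lam)
      - α * (β * lam + β + 2 * lam) / ((β + lam) * (β + 2 * lam) * (1 - α))
      + K₁ * ((1 - α) * r + α) ^ (-(1 + β / lam)) := funext hf₁
    rw [heq]
    have h2 : HasDerivAt (fun r : ℝ => β * r / (β + 2 * lam)) (β / (β + 2 * lam)) r := by
      simpa using (((hasDerivAt_id r).const_mul β).div_const (β + 2 * lam))
    exact ((((hp1.const_mul K₀).div_const _).add h2).sub_const _).add (hp2.const_mul K₁)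
  refine ⟨d, hder, ?_⟩
  -- rewrite rpow terms in terms of X := u ^ (β/lam)
  set X : ℝ := u ^ (β / lam) with hX_def
  have hXpos : 0 < X := Real.rpow_pos_of_pos hu _
  have hXne : X ≠ 0 := ne_of_gt hXpos
  have e1 : u ^ (β / lam - 1) = X / u := by
    rw [Real.rpow_sub hu, Real.rpow_one]
  have e2 : u ^ (-(1 + β / lam)) = 1 / (u * X) := by
    rw [Real.rpow_neg hu.le, Real.rpow_add hu, Real.rpow_one]
    field_simp
    exact hX_def
  have e3 : u ^ (-(1 + β / lam) - 1) = 1 / (u ^ 2 * X) := by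
    have : -(1 + β / lam) - 1 = -(2 + β / lam) := by ring
    rw [this, Real.rpow_neg hu.le, Real.rpow_add hu]
    rw [show (2:ℝ) = ((2:ℕ):ℝ) by norm_num, Real.rpow_natCast]
    field_simp
    exact hX_def
  rw [hf₁ r, hd_def]
  rw [show (1 - α) * r + α = u from rfl]
  rw [e1, e2, e3, ← hX_def]
  have h1 : lam + 2 * β ≠ 0 := by positivity
  have h2 : β + 2 * lam ≠ 0 := by positivity
  have h3 : β + lam ≠ 0 := by positivity
  have h4 : (1 : ℝ) - α ≠ 0 := ne_of_gt h1α
  have h5 : lam ≠ 0 := ne_of_gt hlam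
  have hru : r = (u - α) / (1 - α) := by
    rw [hu_def]; field_simp
    ring
  rw [hru]
  field_simp
  ring
end

section
/- Let α ∈ (0,1), λ > 0, β > 0, K₀ > 0 and let K₂ be a real constant. Define f₂ : (0,1] → ℝ by f₂(r) = λβK₀^(−λ/β)((1−α)r+α)^(λ/β)/((2λ+β)(1−α)) + λr/(2β+λ) − αβλ(1+2β+λ)/((β+λ)(2β+λ)(1−α)) + K₂((1−α)r+α)^(−(1+λ/β)). Then f₂ is differentiable on (0,1] and for every r ∈ (0,1] it satisfies the first-order differential equation β·f₂′(r) = λβK₀^(−λ/β)((1−α)r+α)^(λ/β−1) − λβα/((1−α)r+α) − (1−α)(β+λ)f₂(r)/((1−α)r+α) + (1−α)λr/((1−α)r+α). -/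
/-- Country 2's part of Lemma 2: the general best-response form `f₂` satisfies
the first-order ODE `β f₂' = λβK₀^(−λ/β)((1−α)r+α)^(λ/β−1) − λβα/((1−α)r+α)
  − (1−α)(β+λ)f₂/((1−α)r+α) + (1−α)λr/((1−α)r+α)` on `(0,1]`. -/
theorem lemma2_country2_ODE
    (α lam β K₀ K₂ : ℝ) (hα : α ∈ Set.Ioo (0:ℝ) 1) (hlam : 0 < lam) (hβ : 0 < β)
    (hK₀ : 0 < K₀)
    (f₂ : ℝ → ℝ)
    (hf₂ : ∀ r : ℝ, f₂ r =
      lam * β * K₀ ^ (-(lam / β)) * ((1 - α) * r + α) ^ (lam / β) / ((2 * lam + β) * (1 - α))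
      + lam * r / (2 * β + lam)
      - α * β * lam * (1 + 2 * β + lam) / ((β + lam) * (2 * β + lam) * (1 - α))
      + K₂ * ((1 - α) * r + α) ^ (-(1 + lam / β))) :
    ∀ r ∈ Set.Ioc (0:ℝ) 1, ∃ d : ℝ, HasDerivAt f₂ d r ∧
      β * d = lam * β * K₀ ^ (-(lam / β)) * ((1 - α) * r + α) ^ (lam / β - 1)
        - lam * β * α / ((1 - α) * r + α)
        - (1 - α) * (β + lam) * f₂ r / ((1 - α) * r + α)
        + (1 - α) * lam * r / ((1 - α) * r + α) := by
  obtain ⟨hα0, hα1⟩ := hα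
  intro r hr
  obtain ⟨hr0, hr1⟩ := hr
  set u : ℝ := (1 - α) * r + α with hu_def
  have h1α : (0:ℝ) < 1 - α := by linarith
  have hu : 0 < u := by
    have : 0 < (1 - α) * r := mul_pos h1α hr0
    simp only [hu_def]; linarith
  set p : ℝ := lam / β with hp_def
  set q : ℝ := -(1 + lam / β) with hq_def
  -- derivative of the inner affine map
  have haff : HasDerivAt (fun x : ℝ => (1 - α) * x + α) (1 - α) r := by
    simpa using ((hasDerivAt_id r).const_mul (1 - α)).add_const α
  have hpow : ∀ e : ℝ, HasDerivAt (fun x : ℝ => ((1 - α) * x + α) ^ e)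
      (e * u ^ (e - 1) * (1 - α)) r := by
    intro e
    have := (Real.hasDerivAt_rpow_const (x := u) (p := e) (Or.inl hu.ne')).comp r haff
    exact this
  set A : ℝ := lam * β * K₀ ^ (-(lam / β)) with hA_def
  set d : ℝ := A * (p * u ^ (p - 1) * (1 - α)) / ((2 * lam + β) * (1 - α))
      + lam / (2 * β + lam)
      + K₂ * (q * u ^ (q - 1) * (1 - α)) with hd_def
  refine ⟨d, ?_, ?_⟩
  · have hF : HasDerivAt (fun x : ℝ =>
        A * ((1 - α) * x + α) ^ p / ((2 * lam + β) * (1 - α))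
        + lam * x / (2 * β + lam)
        - α * β * lam * (1 + 2 * β + lam) / ((β + lam) * (2 * β + lam) * (1 - α))
        + K₂ * ((1 - α) * x + α) ^ q) d r := by
      have h1 := ((hpow p).const_mul A).div_const ((2 * lam + β) * (1 - α))
      have h2 : HasDerivAt (fun x : ℝ => lam * x / (2 * β + lam)) (lam / (2 * β + lam)) r := by
        simpa using ((hasDerivAt_id r).const_mul lam).div_const (2 * β + lam)
      have h3 := (hpow q).const_mul K₂
      have := (((h1.add h2).sub_const
        (α * β * lam * (1 + 2 * β + lam) / ((β + lam) * (2 * β + lam) * (1 - α)))).add h3)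
      exact this
    have hfun : f₂ = fun x : ℝ =>
        A * ((1 - α) * x + α) ^ p / ((2 * lam + β) * (1 - α))
        + lam * x / (2 * β + lam)
        - α * β * lam * (1 + 2 * β + lam) / ((β + lam) * (2 * β + lam) * (1 - α))
        + K₂ * ((1 - α) * x + α) ^ q := by
      funext x; simpa [hA_def, hp_def, hq_def] using hf₂ x
    rw [hfun]; exact hF
  · rw [hf₂ r]
    have hup : u ^ p = u ^ (p - 1) * u := by
      rw [← Real.rpow_add_one hu.ne' (p - 1)]; ring_nf
    have huq : u ^ q = u ^ (q - 1) * u := by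
      rw [← Real.rpow_add_one hu.ne' (q - 1)]; ring_nf
    have hp0 : 0 < p := div_pos hlam hβ
    have hpβ : p * β = lam := div_mul_cancel₀ lam hβ.ne'
    have hq1 : q = -(1 + p) := by rw [hq_def, hp_def]
    rw [hd_def, show ((1 - α) * r + α) = u from rfl, hup, huq, hq1, ← hpβ]
    have e1 : 2 * (p * β) + β ≠ 0 := by positivity
    have e2 : 2 * β + p * β ≠ 0 := by positivity
    have e3 : β + p * β ≠ 0 := by positivity
    field_simp
    ring
end

section
/- Let α ∈ (0,1), λ > 0, β > 0, and let I ⊆ ℝ be a nonempty open interval. Let g, h : I → ℝ be differentiable functions with (1−α)g(y)+α > 0 and (1−α)h(y)+α > 0 for all y ∈ I. Define F(y) = β(h(y)−y) + g(y) − λy and assume F(y) ≠ 0 on I. If for all y ∈ I the first-order conditions F(y)·g′(y) = β·g(y) + αβ/(1−α) and F(y)·h′(y)/λ = h(y) + α/(1−α) hold, then there exists a constant K₀ > 0 such that (1−α)g(y) + α = K₀·((1−α)h(y) + α)^(β/λ) for all y ∈ I. -/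
/-- The integration step (eq. (xd)) in the derivation of Lemma 2: if `g` and `h`
satisfy the two first-order optimality conditions on a nonempty open interval,
then `(1−α)g(y) + α = K₀((1−α)h(y) + α)^(β/λ)` for some constant `K₀ > 0`. -/
theorem lemma2_integration_step
    (α lam β : ℝ) (hα : α ∈ Set.Ioo (0:ℝ) 1) (hlam : 0 < lam) (hβ : 0 < β)
    (p q : ℝ) (hpq : p < q) (g h : ℝ → ℝ)
    (hgdiff : ∀ y ∈ Set.Ioo p q, DifferentiableAt ℝ g y)
    (hhdiff : ∀ y ∈ Set.Ioo p q, DifferentiableAt ℝ h y)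
    (hgpos : ∀ y ∈ Set.Ioo p q, 0 < (1 - α) * g y + α)
    (hhpos : ∀ y ∈ Set.Ioo p q, 0 < (1 - α) * h y + α)
    (F : ℝ → ℝ) (hF : ∀ y, F y = β * (h y - y) + g y - lam * y)
    (hFne : ∀ y ∈ Set.Ioo p q, F y ≠ 0)
    (hfoc1 : ∀ y ∈ Set.Ioo p q, F y * deriv g y = β * g y + α * β / (1 - α))
    (hfoc2 : ∀ y ∈ Set.Ioo p q, F y * deriv h y / lam = h y + α / (1 - α)) :
    ∃ K₀ : ℝ, 0 < K₀ ∧ ∀ y ∈ Set.Ioo p q,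
      (1 - α) * g y + α = K₀ * ((1 - α) * h y + α) ^ (β / lam) := by
  obtain ⟨hα0, hα1⟩ := hα
  have h1α : (0:ℝ) < 1 - α := by linarith
  set φ : ℝ → ℝ := fun y =>
    Real.log ((1 - α) * g y + α) - (β / lam) * Real.log ((1 - α) * h y + α) with hφ
  -- φ has derivative 0 on the interval
  have hderiv : ∀ y ∈ Set.Ioo p q, HasDerivAt φ 0 y := by
    intro y hy
    have hGg := hgpos y hy
    have hGh := hhpos y hy
    have hFy := hFne y hy
    have hg' : HasDerivAt (fun z => (1 - α) * g z + α) ((1 - α) * deriv g y) y :=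
      (((hgdiff y hy).hasDerivAt).const_mul (1 - α)).add_const α
    have hh' : HasDerivAt (fun z => (1 - α) * h z + α) ((1 - α) * deriv h y) y :=
      (((hhdiff y hy).hasDerivAt).const_mul (1 - α)).add_const α
    have hlg : HasDerivAt (fun z => Real.log ((1 - α) * g z + α))
        ((1 - α) * deriv g y / ((1 - α) * g y + α)) y :=
      hg'.log (ne_of_gt hGg)
    have hlh : HasDerivAt (fun z => Real.log ((1 - α) * h z + α))
        ((1 - α) * deriv h y / ((1 - α) * h y + α)) y :=
      hh'.log (ne_of_gt hGh)
    have e1 : (1 - α) * (F y * deriv g y) = β * ((1 - α) * g y + α) := by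
      have := hfoc1 y hy
      field_simp at this ⊢
      nlinarith [this]
    have e2 : (1 - α) * (F y * deriv h y) = lam * ((1 - α) * h y + α) := by
      have := hfoc2 y hy
      field_simp at this
      nlinarith [this]
    have r1 : (1 - α) * deriv g y / ((1 - α) * g y + α) = β / F y := by
      field_simp
      nlinarith [e1]
    have r2 : (1 - α) * deriv h y / ((1 - α) * h y + α) = lam / F y := by
      field_simp
      nlinarith [e2]
    have : HasDerivAt φ
        ((1 - α) * deriv g y / ((1 - α) * g y + α)
          - (β / lam) * ((1 - α) * deriv h y / ((1 - α) * h y + α))) y :=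
      hlg.sub (hlh.const_mul (β / lam))
    refine this.congr_deriv ?_
    rw [r1, r2]
    field_simp
    ring
  -- φ is constant on Ioo p q
  have hconst : ∀ y ∈ Set.Ioo p q, φ y = φ ((p + q) / 2) := by
    have hy₀ : (p + q) / 2 ∈ Set.Ioo p q := ⟨by linarith, by linarith⟩
    intro y hy
    have hconv : Convex ℝ (Set.Ioo p q) := convex_Ioo p q
    have hdiff : DifferentiableOn ℝ φ (Set.Ioo p q) := fun z hz =>
      ((hderiv z hz).differentiableAt).differentiableWithinAt
    have hf0 : ∀ z ∈ Set.Ioo p q, fderivWithin ℝ φ (Set.Ioo p q) z = 0 := by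
      intro z hz
      have hfd : HasFDerivAt φ (0 : ℝ →L[ℝ] ℝ) z := by
        have := (hderiv z hz).hasFDerivAt
        rw [show ContinuousLinearMap.toSpanSingleton ℝ (0:ℝ) = 0 from by ext; simp] at this
        exact this
      rw [fderivWithin_of_isOpen isOpen_Ioo hz, hfd.fderiv]
    exact hconv.is_const_of_fderivWithin_eq_zero hdiff hf0 hy hy₀
  refine ⟨Real.exp (φ ((p + q) / 2)), Real.exp_pos _, fun y hy => ?_⟩
  have hGg := hgpos y hy
  have hGh := hhpos y hy
  have hc := hconst y hy
  have hrw : ((1 - α) * h y + α) ^ (β / lam) =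
      Real.exp (Real.log ((1 - α) * h y + α) * (β / lam)) :=
    Real.rpow_def_of_pos hGh _
  rw [hrw, ← Real.exp_add]
  have : φ ((p + q) / 2) + Real.log ((1 - α) * h y + α) * (β / lam)
      = Real.log ((1 - α) * g y + α) := by
    rw [← hc, hφ]; ring
  rw [this, Real.exp_log hGg]
end

section
/- Let α ∈ (0,1), β > 0, and set λ = β. Define f₂ : [0,1] → ℝ by f₂(r) = ((β+1)/3)r − α(β+1)/(6(1−α)) + α³(β+1)/(6(1−α)³(r + α/(1−α))²). Then f₂ is differentiable on (0,1] and for every r ∈ (0,1] it satisfies Country 2's mutual best-response differential equation β·f₂′(r) = λβK₀^(−λ/β)((1−α)r+α)^(λ/β−1) − λβα/((1−α)r+α) − (1−α)(β+λ)f₂(r)/((1−α)r+α) + (1−α)λr/((1−α)r+α) with λ = β and K₀ = 1, i.e. β·f₂′(r) = β² − β²α/((1−α)r+α) − 2β(1−α)f₂(r)/((1−α)r+α) + (1−α)βr/((1−α)r+α). -/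
/-- Part of Theorem 1: the explicit strategy `f₂` for the case `λ = β` satisfies
Country 2's mutual best-response differential equation with `λ = β` and `K₀ = 1`,
i.e. `β f₂′(r) = β² − β²α/((1−α)r+α) − 2β(1−α)f₂(r)/((1−α)r+α) + (1−α)βr/((1−α)r+α)`. -/
theorem theorem1_f2_satisfies_ODE
    (α lam β : ℝ) (hα : α ∈ Set.Ioo (0:ℝ) 1) (hβ : 0 < β) (hlam : lam = β)
    (f₂ : ℝ → ℝ)
    (hf₂ : ∀ r : ℝ, f₂ r =
      ((β + 1) / 3) * r
      - α * (β + 1) / (6 * (1 - α))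
      + α ^ 3 * (β + 1) / (6 * (1 - α) ^ 3 * (r + α / (1 - α)) ^ 2)) :
    ∀ r ∈ Set.Ioc (0:ℝ) 1, ∃ d : ℝ, HasDerivAt f₂ d r ∧
      β * d = β ^ 2
        - β ^ 2 * α / ((1 - α) * r + α)
        - 2 * β * (1 - α) * f₂ r / ((1 - α) * r + α)
        + (1 - α) * β * r / ((1 - α) * r + α) := by
  obtain ⟨hα0, hα1⟩ := hα
  have h1α : (0:ℝ) < 1 - α := by linarith
  have hfe : f₂ = fun r => ((β + 1) / 3) * r
      - α * (β + 1) / (6 * (1 - α))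
      + α ^ 3 * (β + 1) / (6 * (1 - α) ^ 3 * (r + α / (1 - α)) ^ 2) := funext hf₂
  intro r hr
  obtain ⟨hr0, hr1⟩ := hr
  have hden : (0:ℝ) < (1 - α) * r + α := by positivity
  have hra : (0:ℝ) < r + α / (1 - α) := by positivity
  have hD : (0:ℝ) < 6 * (1 - α) ^ 3 * (r + α / (1 - α)) ^ 2 := by positivity
  -- derivative of denominator
  have hDd : HasDerivAt (fun r : ℝ => 6 * (1 - α) ^ 3 * (r + α / (1 - α)) ^ 2)
      (6 * (1 - α) ^ 3 * (2 * (r + α / (1 - α)))) r := by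
    have h0 : HasDerivAt (fun r : ℝ => r + α / (1 - α)) 1 r :=
      (hasDerivAt_id r).add_const _
    have h2 : HasDerivAt (fun r : ℝ => 6 * (1 - α) ^ 3 * (r + α / (1 - α)) ^ 2)
        (6 * (1 - α) ^ 3 * (((2:ℕ):ℝ) * (r + α / (1 - α)) ^ (2 - 1) * 1)) r :=
      (h0.pow 2).const_mul (6 * (1 - α) ^ 3)
    convert h2 using 1
    norm_num
  have hterm3 : HasDerivAt (fun r : ℝ => α ^ 3 * (β + 1) / (6 * (1 - α) ^ 3 * (r + α / (1 - α)) ^ 2))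
      ((0 * (6 * (1 - α) ^ 3 * (r + α / (1 - α)) ^ 2) -
        α ^ 3 * (β + 1) * (6 * (1 - α) ^ 3 * (2 * (r + α / (1 - α))))) /
        (6 * (1 - α) ^ 3 * (r + α / (1 - α)) ^ 2) ^ 2) r :=
    (hasDerivAt_const r (α ^ 3 * (β + 1))).div hDd hD.ne'
  have hterm1 : HasDerivAt (fun r : ℝ => ((β + 1) / 3) * r - α * (β + 1) / (6 * (1 - α)))
      ((β + 1) / 3) r := by
    simpa using ((hasDerivAt_id r).const_mul ((β + 1) / 3)).sub_const (α * (β + 1) / (6 * (1 - α)))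
  have hd : HasDerivAt f₂ ((β + 1) / 3 +
      (0 * (6 * (1 - α) ^ 3 * (r + α / (1 - α)) ^ 2) -
        α ^ 3 * (β + 1) * (6 * (1 - α) ^ 3 * (2 * (r + α / (1 - α))))) /
        (6 * (1 - α) ^ 3 * (r + α / (1 - α)) ^ 2) ^ 2) r := by
    rw [hfe]; exact hterm1.add hterm3
  refine ⟨_, hd, ?_⟩
  rw [hf₂ r]
  have key : r + α / (1 - α) = ((1 - α) * r + α) / (1 - α) := by
    field_simp
  rw [key]
  field_simp
  ring
end

section
/- Let α ∈ (0,1) and β > 0, and define f₁ : [0,1] → ℝ by f₁(r) = ((β+1)/(3β))r − α(β+1)/(6β(1−α)) + α³(β+1)/(6β(1−α)³(r + α/(1−α))²). Then f₁ is monotone nondecreasing on [0,1], and consequently f₁(r) ≥ 0 for all r ∈ [0,1]. -/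
set_option maxHeartbeats 1000000


/-- Country 1's quasi-equilibrium strategy for `λ = β` is monotone nondecreasing
on `[0,1]`, and consequently nonnegative on `[0,1]`. -/
theorem theorem1_f1_monotone_nonneg
    (α β : ℝ) (hα : α ∈ Set.Ioo (0:ℝ) 1) (hβ : 0 < β)
    (f₁ : ℝ → ℝ)
    (hf₁ : ∀ r : ℝ, f₁ r =
      ((β + 1) / (3 * β)) * r
      - α * (β + 1) / (6 * β * (1 - α))
      + α ^ 3 * (β + 1) / (6 * β * (1 - α) ^ 3 * (r + α / (1 - α)) ^ 2)) :
    MonotoneOn f₁ (Set.Icc 0 1) ∧ ∀ r ∈ Set.Icc (0:ℝ) 1, 0 ≤ f₁ r := by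
  obtain ⟨hα0, hα1⟩ := hα
  have h1α : (0:ℝ) < 1 - α := by linarith
  obtain ⟨c, hc⟩ : ∃ c : ℝ, c = α / (1 - α) := ⟨_, rfl⟩
  have hcpos : 0 < c := hc ▸ div_pos hα0 h1α
  have hβne : β ≠ 0 := ne_of_gt hβ
  have h1αne : (1:ℝ) - α ≠ 0 := ne_of_gt h1α
  have hmono : MonotoneOn f₁ (Set.Icc 0 1) := by
    rintro s ⟨hs0, hs1⟩ t ⟨ht0, ht1⟩ hst
    have hsc : 0 < s + c := by linarith
    have htc : 0 < t + c := by linarith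
    have hscne : s + c ≠ 0 := ne_of_gt hsc
    have htcne : t + c ≠ 0 := ne_of_gt htc
    have hdiff : f₁ t - f₁ s =
        ((β + 1) / (6 * β)) * (t - s) *
          ((2 * (s + c) ^ 2 * (t + c) ^ 2 - c ^ 3 * (s + t + 2 * c)) /
            ((s + c) ^ 2 * (t + c) ^ 2)) := by
      rw [hf₁ t, hf₁ s, hc]
      field_simp
      ring
    have hnum : 0 ≤ 2 * (s + c) ^ 2 * (t + c) ^ 2 - c ^ 3 * (s + t + 2 * c) := by
      have h3 : c ^ 2 ≤ (s + c) * (t + c) := by nlinarith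
      have h4 : c * (s + t + 2 * c) ≤ 2 * ((s + c) * (t + c)) := by nlinarith
      have h5 := mul_le_mul h3 h4 (by positivity) (le_of_lt (mul_pos hsc htc))
      nlinarith [h5]
    have hK : 0 ≤ (β + 1) / (6 * β) := by positivity
    have : 0 ≤ f₁ t - f₁ s := by
      rw [hdiff]
      have hden : 0 < (s + c) ^ 2 * (t + c) ^ 2 := by positivity
      exact mul_nonneg (mul_nonneg hK (by linarith)) (div_nonneg hnum (le_of_lt hden))
    linarith
  refine ⟨hmono, fun r hr => ?_⟩
  have h0 : f₁ 0 = 0 := by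
    rw [hf₁ 0]
    have hαne : α ≠ 0 := ne_of_gt hα0
    field_simp
    ring
  have := hmono (Set.mem_Icc.mpr ⟨le_refl 0, zero_le_one⟩) hr hr.1
  linarith
end

section
/- Let α ∈ (0,1), λ > 0, β > 0, K₀ > 0. For ε > 0 small, let f₁^ε denote the general mutual best-response strategy f₁ of Lemma 2 with constant K₁ = K₁ᵃᵖ(ε) := [ K₀α^(β/λ)(1 + (1−α)βε/(αλ))/((λ+2β)(1−α)) + βε/(β+2λ) − α(βλ+β+2λ)/((β+λ)(β+2λ)(1−α)) ] / [ α^(−(1+β/λ))((1+β/λ)((1−α)/α)ε − 1) ], and let f₂^ε denote the strategy f₂ of Lemma 2 with constant K₂ = K₂ᵃᵖ(ε) := [ λβK₀^(−λ/β)α^(λ/β)(1 + (1−α)λε/(αβ))/((2λ+β)(1−α)) + λε/(2β+λ) − αβλ(1+2β+λ)/((β+λ)(2β+λ)(1−α)) ] / [ α^(−(1+λ/β))((1+λ/β)((1−α)/α)ε − 1) ]. Then f₁^ε(ε) = O(ε²) and f₂^ε(ε) = O(ε²) as ε → 0⁺; that is, the approximate quasi-equilibrium strategies satisfy the boundary conditions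 f₁(ε) = f₂(ε) = 0 to leading order in ε. -/
open Asymptotics Filter Set

/-- If `F` is differentiable near `0`, `F 0 = 0`, and `F' = O(x)`, then `F = O(x²)`. -/
lemma isBigO_sq_of_deriv {F F' : ℝ → ℝ}
    (hF : ∀ᶠ x in nhds (0:ℝ), HasDerivAt F (F' x) x)
    (h0 : F 0 = 0) (hd : F' =O[nhds (0:ℝ)] (fun x => x)) :
    F =O[nhds (0:ℝ)] (fun x : ℝ => x ^ 2) := by
  obtain ⟨C, hC⟩ := isBigO_iff.mp hd
  rw [isBigO_iff]
  refine ⟨max C 0, ?_⟩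
  have h2 : ∀ᶠ x in nhds (0:ℝ), HasDerivAt F (F' x) x ∧ ‖F' x‖ ≤ max C 0 * ‖x‖ := by
    filter_upwards [hF, hC] with x hx1 hx2
    exact ⟨hx1, hx2.trans (mul_le_mul_of_nonneg_right (le_max_left _ _) (norm_nonneg _))⟩
  rw [Metric.eventually_nhds_iff] at h2
  obtain ⟨δ, hδ, hP⟩ := h2
  have hball : ∀ᶠ x in nhds (0:ℝ), dist x 0 < δ :=
    Metric.eventually_nhds_iff.mpr ⟨δ, hδ, fun h => id⟩
  filter_upwards [hball] with x hx
  have hxabs : |x| < δ := by simpa [Real.dist_eq] using hx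
  have habs : ∀ t ∈ uIcc (0:ℝ) x, |t| ≤ |x| := by
    intro t ht
    rcases Set.mem_uIcc.mp ht with ⟨ht1, ht2⟩ | ⟨ht1, ht2⟩
    · rw [abs_of_nonneg ht1]; exact ht2.trans (le_abs_self x)
    · rw [abs_of_nonpos ht2]; exact (neg_le_neg ht1).trans (neg_le_abs x)
  have hmem : ∀ t ∈ uIcc (0:ℝ) x, dist t 0 < δ := by
    intro t ht
    rw [Real.dist_eq, sub_zero]
    exact lt_of_le_of_lt (habs t ht) hxabs
  have key := Convex.norm_image_sub_le_of_norm_hasDerivWithin_le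
    (f := F) (f' := F') (s := uIcc (0:ℝ) x) (C := max C 0 * |x|)
    (fun t ht => ((hP (hmem t ht)).1).hasDerivWithinAt)
    (fun t ht => by
      refine ((hP (hmem t ht)).2).trans ?_
      have : ‖t‖ ≤ |x| := habs t ht
      exact mul_le_mul_of_nonneg_left this (le_max_right C 0))
    (convex_uIcc _ _) Set.left_mem_uIcc Set.right_mem_uIcc
  rw [h0, sub_zero] at key
  calc ‖F x‖ ≤ max C 0 * |x| * ‖x - 0‖ := key
    _ = max C 0 * ‖x ^ 2‖ := by
        rw [sub_zero, Real.norm_eq_abs, Real.norm_eq_abs, abs_pow, sq, mul_assoc]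
    _ ≤ max C 0 * ‖x ^ 2‖ := le_rfl

/-- First-order Taylor remainder of `ε ↦ (b ε + a)^r` at `0` is `O(ε²)`. -/
lemma rpow_taylor_isBigO (a b r : ℝ) (ha : 0 < a) :
    (fun ε : ℝ => (b * ε + a) ^ r - a ^ r - r * a ^ (r - 1) * b * ε)
      =O[nhds (0:ℝ)] (fun ε : ℝ => ε ^ 2) := by
  have hcontlin : Continuous (fun ε : ℝ => b * ε + a) := by continuity
  have hpos : ∀ᶠ ε in nhds (0:ℝ), 0 < b * ε + a := by
    have h0 : (0:ℝ) < b * 0 + a := by simpa using ha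
    exact (hcontlin.continuousAt (x := 0)).eventually (eventually_gt_nhds h0)
  set F' : ℝ → ℝ := fun ε => b * r * (b * ε + a) ^ (r - 1) - r * a ^ (r - 1) * b with hF'def
  have hlin : ∀ ε : ℝ, HasDerivAt (fun ε : ℝ => b * ε + a) b ε := by
    intro ε
    simpa using ((hasDerivAt_id ε).const_mul b).add_const a
  have hF : ∀ᶠ ε in nhds (0:ℝ), HasDerivAt
      (fun ε : ℝ => (b * ε + a) ^ r - a ^ r - r * a ^ (r - 1) * b * ε) (F' ε) ε := by
    filter_upwards [hpos] with ε hε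
    have h1 : HasDerivAt (fun ε : ℝ => (b * ε + a) ^ r) (b * r * (b * ε + a) ^ (r - 1)) ε :=
      (hlin ε).rpow_const (Or.inl hε.ne')
    have h3 : HasDerivAt (fun ε : ℝ => r * a ^ (r - 1) * b * ε) (r * a ^ (r - 1) * b) ε := by
      simpa using (hasDerivAt_id ε).const_mul (r * a ^ (r - 1) * b)
    exact (h1.sub_const (a ^ r)).sub h3
  have h0 : (fun ε : ℝ => (b * ε + a) ^ r - a ^ r - r * a ^ (r - 1) * b * ε) 0 = 0 := by
    simp
  have hd : F' =O[nhds (0:ℝ)] (fun x : ℝ => x) := by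
    have hdiff : HasDerivAt F' (b * r * ((r - 1) * a ^ (r - 1 - 1) * b)) 0 := by
      have h1 : HasDerivAt (fun ε : ℝ => (b * ε + a) ^ (r - 1))
          (b * (r - 1) * (b * 0 + a) ^ (r - 1 - 1)) 0 :=
        (hlin 0).rpow_const (Or.inl (by simpa using ha.ne'))
      have := (h1.const_mul (b * r)).sub_const (r * a ^ (r - 1) * b)
      convert this using 1
      · rfl
      · rfl
      simp only [mul_zero, zero_add]
      ring
    have hF'0 : F' 0 = 0 := by simp [hF'def]; ring
    have := hdiff.differentiableAt.isBigO_sub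
    simpa [hF'0] using this
  exact isBigO_sq_of_deriv hF h0 hd

lemma gen_isBigO (α p c b C : ℝ) (hα0 : 0 < α) :
    (fun ε : ℝ => c * ((1 - α) * ε + α) ^ p + b * ε - C
        + ((c * α ^ p * (1 + p * (1 - α) * ε / α) + b * ε - C)
            / (α ^ (-(1 + p)) * ((1 + p) * ((1 - α) / α) * ε - 1)))
          * ((1 - α) * ε + α) ^ (-(1 + p)))
      =O[nhds (0:ℝ)] (fun ε : ℝ => ε ^ 2) := by
  have hmpos : (0:ℝ) < α ^ (-(1 + p)) := Real.rpow_pos_of_pos hα0 _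
  -- the linear "denominator" function
  have hDt : Tendsto (fun ε : ℝ => α ^ (-(1 + p)) * ((1 + p) * ((1 - α) / α) * ε - 1))
      (nhds 0) (nhds (-(α ^ (-(1 + p))))) := by
    have hc : Continuous (fun ε : ℝ => α ^ (-(1 + p)) * ((1 + p) * ((1 - α) / α) * ε - 1)) := by
      fun_prop
    have := hc.continuousAt (x := (0:ℝ))
    rw [ContinuousAt] at this
    convert this using 2
    simp
  have hDne : ∀ᶠ ε in nhds (0:ℝ), (α ^ (-(1 + p)) * ((1 + p) * ((1 - α) / α) * ε - 1)) ≠ 0 :=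
    hDt.eventually (eventually_ne_nhds (neg_ne_zero.mpr hmpos.ne'))
  -- Taylor remainders
  have h1 : (fun ε : ℝ => (c * ((1 - α) * ε + α) ^ p + b * ε - C)
      - (c * α ^ p * (1 + p * (1 - α) * ε / α) + b * ε - C)) =O[nhds (0:ℝ)]
      (fun ε : ℝ => ε ^ 2) := by
    refine ((rpow_taylor_isBigO α (1 - α) p hα0).const_mul_left c).congr_left fun ε => ?_
    rw [Real.rpow_sub_one hα0.ne']
    field_simp
    ring
  have h2 : (fun ε : ℝ => (α ^ (-(1 + p)) * ((1 + p) * ((1 - α) / α) * ε - 1))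
      + ((1 - α) * ε + α) ^ (-(1 + p))) =O[nhds (0:ℝ)] (fun ε : ℝ => ε ^ 2) := by
    refine (rpow_taylor_isBigO α (1 - α) (-(1 + p)) hα0).congr_left fun ε => ?_
    rw [Real.rpow_sub_one hα0.ne']
    field_simp
    ring
  -- boundedness facts
  have hNb : (fun ε : ℝ => c * α ^ p * (1 + p * (1 - α) * ε / α) + b * ε - C)
      =O[nhds (0:ℝ)] (fun _ : ℝ => (1:ℝ)) := by
    have hc : Continuous (fun ε : ℝ => c * α ^ p * (1 + p * (1 - α) * ε / α) + b * ε - C) := by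
      fun_prop
    exact (hc.continuousAt (x := (0:ℝ))).isBigO_one ℝ
  have hDb : (fun ε : ℝ => α ^ (-(1 + p)) * ((1 + p) * ((1 - α) / α) * ε - 1))
      =O[nhds (0:ℝ)] (fun _ : ℝ => (1:ℝ)) := hDt.isBigO_one ℝ
  have hDinv : (fun ε : ℝ => (α ^ (-(1 + p)) * ((1 + p) * ((1 - α) / α) * ε - 1))⁻¹)
      =O[nhds (0:ℝ)] (fun _ : ℝ => (1:ℝ)) :=
    (hDt.inv₀ (neg_ne_zero.mpr hmpos.ne')).isBigO_one ℝ
  have main : (fun ε : ℝ =>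
      (((c * ((1 - α) * ε + α) ^ p + b * ε - C)
          - (c * α ^ p * (1 + p * (1 - α) * ε / α) + b * ε - C))
        * (α ^ (-(1 + p)) * ((1 + p) * ((1 - α) / α) * ε - 1))
      + (c * α ^ p * (1 + p * (1 - α) * ε / α) + b * ε - C)
        * ((α ^ (-(1 + p)) * ((1 + p) * ((1 - α) / α) * ε - 1))
            + ((1 - α) * ε + α) ^ (-(1 + p))))
      * (α ^ (-(1 + p)) * ((1 + p) * ((1 - α) / α) * ε - 1))⁻¹)
      =O[nhds (0:ℝ)] (fun ε : ℝ => ε ^ 2) := by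
    have t1 := (h1.mul hDb).congr_right fun x => mul_one ((x:ℝ) ^ 2)
    have t2 := (hNb.mul h2).congr_right fun x => one_mul ((x:ℝ) ^ 2)
    have t3 := ((t1.add t2).mul hDinv).congr_right fun x => mul_one ((x:ℝ) ^ 2)
    exact t3
  have lem : ∀ (G N D h : ℝ), D ≠ 0 → ((G - N) * D + N * (D + h)) * D⁻¹ = G + N / D * h := by
    intro G N D h hD
    field_simp
    ring
  refine main.congr' ?_ EventuallyEq.rfl
  filter_upwards [hDne] with ε hε
  exact lem _ _ _ _ hε


/-- Boundary-condition content of Theorem 5 (eq. (yy)): with the approximate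
constants `K₁ᵃᵖ(ε), K₂ᵃᵖ(ε)` of eqs. (10)–(11), the approximate quasi-equilibrium
strategies satisfy `f₁^ε(ε) = O(ε²)` and `f₂^ε(ε) = O(ε²)` as `ε → 0⁺`. -/
theorem approximate_boundary_conditions
    (α lam β K₀ : ℝ) (hα : α ∈ Set.Ioo (0:ℝ) 1) (hlam : 0 < lam) (hβ : 0 < β)
    (hK₀ : 0 < K₀)
    (K₁ap K₂ap : ℝ → ℝ)
    (hK₁ap : ∀ ε : ℝ, K₁ap ε =
      (K₀ * α ^ (β / lam) * (1 + (1 - α) * β * ε / (α * lam)) / ((lam + 2 * β) * (1 - α))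
        + β * ε / (β + 2 * lam)
        - α * (β * lam + β + 2 * lam) / ((β + lam) * (β + 2 * lam) * (1 - α)))
      / (α ^ (-(1 + β / lam)) * ((1 + β / lam) * ((1 - α) / α) * ε - 1)))
    (hK₂ap : ∀ ε : ℝ, K₂ap ε =
      (lam * β * K₀ ^ (-(lam / β)) * α ^ (lam / β) * (1 + (1 - α) * lam * ε / (α * β))
            / ((2 * lam + β) * (1 - α))
        + lam * ε / (2 * β + lam)
        - α * β * lam * (1 + 2 * β + lam) / ((β + lam) * (2 * β + lam) * (1 - α)))
      / (α ^ (-(1 + lam / β)) * ((1 + lam / β) * ((1 - α) / α) * ε - 1))) :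
    (fun ε : ℝ =>
        K₀ * ((1 - α) * ε + α) ^ (β / lam) / ((lam + 2 * β) * (1 - α))
        + β * ε / (β + 2 * lam)
        - α * (β * lam + β + 2 * lam) / ((β + lam) * (β + 2 * lam) * (1 - α))
        + K₁ap ε * ((1 - α) * ε + α) ^ (-(1 + β / lam)))
      =O[nhdsWithin 0 (Set.Ioi 0)] (fun ε : ℝ => ε ^ 2)
    ∧ (fun ε : ℝ =>
        lam * β * K₀ ^ (-(lam / β)) * ((1 - α) * ε + α) ^ (lam / β)
            / ((2 * lam + β) * (1 - α))
        + lam * ε / (2 * β + lam)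
        - α * β * lam * (1 + 2 * β + lam) / ((β + lam) * (2 * β + lam) * (1 - α))
        + K₂ap ε * ((1 - α) * ε + α) ^ (-(1 + lam / β)))
      =O[nhdsWithin 0 (Set.Ioi 0)] (fun ε : ℝ => ε ^ 2) := by
  constructor
  · have g1 := (gen_isBigO α (β / lam) (K₀ / ((lam + 2 * β) * (1 - α))) (β / (β + 2 * lam))
      (α * (β * lam + β + 2 * lam) / ((β + lam) * (β + 2 * lam) * (1 - α))) hα.1).mono
      (nhdsWithin_le_nhds (s := Set.Ioi (0:ℝ)))
    refine g1.congr_left fun ε => ?_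
    rw [hK₁ap ε]
    ring
  · have g2 := (gen_isBigO α (lam / β)
      (lam * β * K₀ ^ (-(lam / β)) / ((2 * lam + β) * (1 - α))) (lam / (2 * β + lam))
      (α * β * lam * (1 + 2 * β + lam) / ((β + lam) * (2 * β + lam) * (1 - α))) hα.1).mono
      (nhdsWithin_le_nhds (s := Set.Ioi (0:ℝ)))
    refine g2.congr_left fun ε => ?_
    rw [hK₂ap ε]
    ring
end
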